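/- The map f : C_q × F_{p,q} → N_{pq²} determined on generators by f(α) = a^p, f(β) = a^q, f(γ) = c is a well-defined group isomorphism. In particular, N_{pq²} is isomorphic to the direct product C_q × F_{p,q}. -/

import Mathlib

open Multiplicative

namespace Mizerka

/-- The standing hypotheses: `p` and `q` are odd primes with `q ∣ p - 1`, and `i` is a
natural number with `i ≡ 1 (mod q)` whose multiplicative order modulo `p` equals `q`. -/
structure Hyp (p q i : ℕ) : Prop where
  hp : Nat.Prime p
  hq : Nat.Prime q
  hoddp : Odd p
  hoddq : Odd q
  hdvd : q ∣ p - 1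
  hmod : i ≡ 1 [MOD q]
  hord : orderOf (i : ZMod p) = q

namespace Hyp

variable {p q i : ℕ}

theorem coprime_q (h : Hyp p q i) : Nat.Coprime i q := by
  have h1 : i % q = 1 % q := h.hmod
  unfold Nat.Coprime
  rw [Nat.gcd_comm, Nat.gcd_rec, h1, ← Nat.gcd_rec, Nat.gcd_one_right]

theorem coprime_p (h : Hyp p q i) : Nat.Coprime i p := by
  haveI : NeZero p := ⟨h.hp.ne_zero⟩
  have hq1 : q - 1 + 1 = q := Nat.succ_pred_eq_of_pos h.hq.pos
  have hmul : (i : ZMod p) * (i : ZMod p) ^ (q - 1) = 1 := by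
    rw [← pow_succ', hq1, ← h.hord, pow_orderOf_eq_one]
  exact (ZMod.isUnit_iff_coprime i p).mp ⟨⟨_, _, hmul, by rw [mul_comm]; exact hmul⟩, rfl⟩

theorem coprime (h : Hyp p q i) : Nat.Coprime i (p * q) :=
  Nat.Coprime.mul_right h.coprime_p h.coprime_q

theorem pow_q_modeq (h : Hyp p q i) : i ^ q ≡ 1 [MOD p * q] := by
  have hpq : p ≠ q := by
    have h1 : 0 < p - 1 := by have := h.hp.two_le; omega
    have := Nat.le_of_dvd h1 h.hdvd
    omega
  have hc : Nat.Coprime p q := (Nat.coprime_primes h.hp h.hq).mpr hpq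
  rw [← Nat.modEq_and_modEq_iff_modEq_mul hc]
  constructor
  · haveI : NeZero p := ⟨h.hp.ne_zero⟩
    have hcast : ((i ^ q : ℕ) : ZMod p) = ((1 : ℕ) : ZMod p) := by
      push_cast
      rw [← h.hord, pow_orderOf_eq_one]
    exact (ZMod.natCast_eq_natCast_iff _ _ _).mp hcast
  · calc i ^ q ≡ 1 ^ q [MOD q] := h.hmod.pow q
      _ = 1 := one_pow q

/-- The unit of `ZMod (p*q)` determined by `i`. -/
def unit (h : Hyp p q i) : (ZMod (p * q))ˣ := ZMod.unitOfCoprime i h.coprime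

/-- The unit of `ZMod p` determined by `i`. -/
def unitP (h : Hyp p q i) : (ZMod p)ˣ := ZMod.unitOfCoprime i h.coprime_p

theorem unit_pow (h : Hyp p q i) : h.unit ^ q = 1 := by
  apply Units.ext
  have h2 : ((i ^ q : ℕ) : ZMod (p * q)) = ((1 : ℕ) : ZMod (p * q)) :=
    (ZMod.natCast_eq_natCast_iff _ _ _).mpr h.pow_q_modeq
  push_cast at h2
  simpa [Hyp.unit] using h2

theorem unitP_pow (h : Hyp p q i) : h.unitP ^ q = 1 := by
  apply Units.ext
  have h2 : (i : ZMod p) ^ q = 1 := by rw [← h.hord]; exact pow_orderOf_eq_one _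
  simpa [Hyp.unitP] using h2

end Hyp

/-- Multiplication by a unit, as an automorphism of the (multiplicatively written)
cyclic group `ZMod n`. -/
def zmodMulAut (n : ℕ) : (ZMod n)ˣ →* MulAut (Multiplicative (ZMod n)) where
  toFun u :=
    { toFun := fun x => ofAdd ((u : ZMod n) * x.toAdd)
      invFun := fun x => ofAdd (((u⁻¹ : (ZMod n)ˣ) : ZMod n) * x.toAdd)
      left_inv := fun x => by simp
      right_inv := fun x => by simp
      map_mul' := fun x y => by simp [mul_add, ← ofAdd_add] }
  map_one' := by ext x; simp
  map_mul' u v := by ext x; simp [mul_assoc]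

/-- The function underlying the automorphism of the dihedral group induced by
multiplication by a unit on the rotation part. -/
def dihedralAutFun (n : ℕ) (u : (ZMod n)ˣ) : DihedralGroup n → DihedralGroup n
  | .r j => .r ((u : ZMod n) * j)
  | .sr j => .sr ((u : ZMod n) * j)

/-- Multiplication of indices by a unit, as an automorphism of the dihedral group:
`a ↦ a^u`, `b ↦ b`. -/
def dihedralAut (n : ℕ) : (ZMod n)ˣ →* MulAut (DihedralGroup n) where
  toFun u :=
    { toFun := dihedralAutFun n u
      invFun := dihedralAutFun n u⁻¹
      left_inv := fun x => by cases x <;> simp [dihedralAutFun]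
      right_inv := fun x => by cases x <;> simp [dihedralAutFun]
      map_mul' := fun x y => by cases x <;> cases y <;> simp [dihedralAutFun, mul_add, mul_sub] }
  map_one' := by ext x; cases x <;> simp [dihedralAutFun]
  map_mul' u v := by ext x; cases x <;> simp [dihedralAutFun, mul_assoc]

/-- The homomorphism `ZMod q →* G` (written multiplicatively) sending `1` to a fixed
element `g` with `g ^ q = 1`. -/
def zmodPow {G : Type*} [Group G] (q : ℕ) [NeZero q] (g : G) (hg : g ^ q = 1) :
    Multiplicative (ZMod q) →* G where
  toFun x := g ^ (toAdd x).val
  map_one' := by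
    show g ^ (toAdd (1 : Multiplicative (ZMod q))).val = 1
    rw [toAdd_one, ZMod.val_zero, pow_zero]
  map_mul' x y := by
    have key : ∀ m : ℕ, g ^ (m % q) = g ^ m := fun m => by
      conv_rhs => rw [← Nat.div_add_mod m q]
      rw [pow_add, pow_mul, hg, one_pow, one_mul]
    show g ^ (toAdd (x * y)).val = g ^ (toAdd x).val * g ^ (toAdd y).val
    rw [toAdd_mul, ZMod.val_add, key, pow_add]

namespace Hyp

variable {p q i : ℕ}

/-- The action of `C_q` on `C_{pq}` sending the generator to multiplication by `i`. -/
def phiN (h : Hyp p q i) : Multiplicative (ZMod q) →* MulAut (Multiplicative (ZMod (p * q))) :=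
  haveI : NeZero q := ⟨h.hq.ne_zero⟩
  zmodPow q (zmodMulAut (p * q) h.unit) (by rw [← map_pow, h.unit_pow, map_one])

/-- The action of `C_q` on `D_{2pq}` sending the generator to `τ` (`τ(a) = a^i`, `τ(b) = b`). -/
def phiG (h : Hyp p q i) : Multiplicative (ZMod q) →* MulAut (DihedralGroup (p * q)) :=
  haveI : NeZero q := ⟨h.hq.ne_zero⟩
  zmodPow q (dihedralAut (p * q) h.unit) (by rw [← map_pow, h.unit_pow, map_one])

/-- The action of `C_q` on `C_p` sending the generator to multiplication by `i`. -/
def phiF (h : Hyp p q i) : Multiplicative (ZMod q) →* MulAut (Multiplicative (ZMod p)) :=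
  haveI : NeZero q := ⟨h.hq.ne_zero⟩
  zmodPow q (zmodMulAut p h.unitP) (by rw [← map_pow, h.unitP_pow, map_one])

end Hyp

/-- The group `N_{pq²} = ⟨a, c ∣ a^{pq} = c^q = 1, c a c⁻¹ = a^i⟩ = C_{pq} ⋊ C_q`. -/
abbrev Npq2 {p q i : ℕ} (h : Hyp p q i) : Type :=
  Multiplicative (ZMod (p * q)) ⋊[h.phiN] Multiplicative (ZMod q)

/-- The group `G_{p,q} = D_{2pq} ⋊_φ C_q`. -/
abbrev Gpq {p q i : ℕ} (h : Hyp p q i) : Type :=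
  DihedralGroup (p * q) ⋊[h.phiG] Multiplicative (ZMod q)

/-- The Frobenius group `F_{p,q} = C_p ⋊ C_q` (the nonabelian group of order `pq`). -/
abbrev Fpq {p q i : ℕ} (h : Hyp p q i) : Type :=
  Multiplicative (ZMod p) ⋊[h.phiF] Multiplicative (ZMod q)

variable {p q i : ℕ}

/-- The generator `a` of `N_{pq²}`. -/
def aN (h : Hyp p q i) : Npq2 h := SemidirectProduct.inl (ofAdd 1)

/-- The generator `c` of `N_{pq²}`. -/
def cN (h : Hyp p q i) : Npq2 h := SemidirectProduct.inr (ofAdd 1)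

/-- The generator `a` of `G_{p,q}`. -/
def aG (h : Hyp p q i) : Gpq h := SemidirectProduct.inl (DihedralGroup.r 1)

/-- The generator `b` of `G_{p,q}`. -/
def bG (h : Hyp p q i) : Gpq h := SemidirectProduct.inl (DihedralGroup.sr 0)

/-- The generator `c` of `G_{p,q}`. -/
def cG (h : Hyp p q i) : Gpq h := SemidirectProduct.inr (ofAdd 1)

/-- The real conjugacy class `(g)^± = (g) ∪ (g⁻¹)`. -/
def realClass {G : Type*} [Group G] (g : G) : Set G := {x | IsConj g x ∨ IsConj g⁻¹ x}

/-- `N` is a normal subgroup whose quotient is an `ℓ`-group (the quotient has `ℓ`-power order,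
i.e. `N` has `ℓ`-power index). -/
def OQuot {G : Type*} [Group G] (ℓ : ℕ) (N : Subgroup G) : Prop :=
  N.Normal ∧ ∃ k : ℕ, N.index = ℓ ^ k

/-- `H` is a large subgroup of `G`: it contains `O^ℓ(G)`, the smallest normal subgroup
with `ℓ`-group quotient, for some prime `ℓ`. -/
def IsLarge {G : Type*} [Group G] (H : Subgroup G) : Prop :=
  ∃ ℓ : ℕ, Nat.Prime ℓ ∧
    ∃ N : Subgroup G, OQuot ℓ N ∧ (∀ M : Subgroup G, OQuot ℓ M → N ≤ M) ∧ N ≤ H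

section Reps

variable {k : Type*} [CommSemiring k] {G : Type*} [Group G]

/-- The subspace `V^H` of `H`-fixed vectors of a representation. -/
def fixedPts {V : Type*} [AddCommMonoid V] [Module k V]
    (ρ : Representation k G V) (H : Subgroup G) : Submodule k V where
  carrier := {v | ∀ g ∈ H, ρ g v = v}
  add_mem' := by
    intro a b ha hb g hg
    rw [map_add, ha g hg, hb g hg]
  zero_mem' := by
    intro g hg
    rw [map_zero]
  smul_mem' := by
    intro c v hv g hg
    rw [map_smul, hv g hg]

end Reps

/-- The weak gap condition for a real representation: `dim V^P ≥ 2 dim V^H` for all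
`P < H ≤ G` with `P` of prime power order. -/
def WeakGap {G : Type*} [Group G] {V : Type*} [AddCommGroup V] [Module ℝ V]
    (ρ : Representation ℝ G V) : Prop :=
  ∀ P H : Subgroup G, P < H → (∃ ℓ k : ℕ, Nat.Prime ℓ ∧ Nat.card P = ℓ ^ k) →
    2 * Module.finrank ℝ (fixedPts ρ H) ≤ Module.finrank ℝ (fixedPts ρ P)

/-- Isomorphism of real representations: an equivariant linear equivalence. -/
def RepIso {G : Type*} [Group G] {U V : Type*} [AddCommGroup U] [Module ℝ U]
    [AddCommGroup V] [Module ℝ V]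
    (ρU : Representation ℝ G U) (ρV : Representation ℝ G V) : Prop :=
  ∃ e : U ≃ₗ[ℝ] V, ∀ (g : G) (u : U), e (ρU g u) = ρV g (e u)

/-- Two real representations are `𝒫`-matched if their restrictions to every subgroup of
prime power order are isomorphic. -/
def PMatched {G : Type*} [Group G] {U V : Type*} [AddCommGroup U] [Module ℝ U]
    [AddCommGroup V] [Module ℝ V]
    (ρU : Representation ℝ G U) (ρV : Representation ℝ G V) : Prop :=
  ∀ P : Subgroup G, (∃ ℓ k : ℕ, Nat.Prime ℓ ∧ Nat.card P = ℓ ^ k) →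
    RepIso (ρU.comp P.subtype) (ρV.comp P.subtype)

/-- A bundled finite-dimensional-free real representation of `G`. -/
structure RealRep (G : Type*) [Group G] where
  carrier : Type
  [acg : AddCommGroup carrier]
  [mod : Module ℝ carrier]
  rho : Representation ℝ G carrier

attribute [instance] RealRep.acg RealRep.mod

theorem dihedralAut_pow_r (n : ℕ) (u : (ZMod n)ˣ) (k : ℕ) (m : ZMod n) :
    ((dihedralAut n u) ^ k) (DihedralGroup.r m)
      = DihedralGroup.r (((u ^ k : (ZMod n)ˣ) : ZMod n) * m) := by
  induction k generalizing m with
  | zero => simp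
  | succ k ih =>
    rw [pow_succ, MulAut.mul_apply]
    have h1 : (dihedralAut n u) (DihedralGroup.r m) = DihedralGroup.r ((u : ZMod n) * m) := rfl
    rw [h1, ih, pow_succ, Units.val_mul, mul_assoc]

theorem Hyp.phiG_r (h : Hyp p q i) (z : Multiplicative (ZMod q)) (m : ZMod (p * q)) :
    h.phiG z (DihedralGroup.r m)
      = DihedralGroup.r (((h.unit ^ (toAdd z).val : (ZMod (p * q))ˣ) : ZMod (p * q)) * m) := by
  have h1 : h.phiG z = (dihedralAut (p * q) h.unit) ^ (toAdd z).val := rfl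
  rw [h1, dihedralAut_pow_r]

theorem r_inv (n : ℕ) (m : ZMod n) : (DihedralGroup.r m)⁻¹ = DihedralGroup.r (-m) := rfl

/-- The subgroup `N_{pq²} = {(aˡ, cᵐ)}` of `G_{p,q}`. -/
def NSub (h : Hyp p q i) : Subgroup (Gpq h) where
  carrier := {x | ∃ l : ZMod (p * q), x.left = DihedralGroup.r l}
  one_mem' := ⟨0, rfl⟩
  mul_mem' := by
    rintro x y ⟨lx, hx⟩ ⟨ly, hy⟩
    refine ⟨lx + (h.unit ^ (toAdd x.right).val : (ZMod (p * q))ˣ) * ly, ?_⟩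
    rw [SemidirectProduct.mul_left, hx, hy, h.phiG_r, DihedralGroup.r_mul_r]
  inv_mem' := by
    rintro x ⟨lx, hx⟩
    refine ⟨-((h.unit ^ (toAdd x.right⁻¹).val : (ZMod (p * q))ˣ) * lx), ?_⟩
    rw [SemidirectProduct.inv_left, hx, r_inv, h.phiG_r]
    congr 1
    ring

/-- The subgroup `N_{2pq} = {(bᵉaˡ, 1)} ≅ D_{2pq}` of `G_{p,q}`. -/
def N2pqSub (h : Hyp p q i) : Subgroup (Gpq h) :=
  MonoidHom.ker SemidirectProduct.rightHom

/-- The subgroup `N¹_{pq} = {(aˡ, 1)}` of `G_{p,q}`. -/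
def NpqOneSub (h : Hyp p q i) : Subgroup (Gpq h) where
  carrier := {x | x.right = 1 ∧ ∃ l : ZMod (p * q), x.left = DihedralGroup.r l}
  one_mem' := ⟨rfl, 0, rfl⟩
  mul_mem' := by
    rintro x y ⟨hx1, lx, hx⟩ ⟨hy1, ly, hy⟩
    refine ⟨by rw [SemidirectProduct.mul_right, hx1, hy1, mul_one],
      lx + (h.unit ^ (toAdd x.right).val : (ZMod (p * q))ˣ) * ly, ?_⟩
    rw [SemidirectProduct.mul_left, hx, hy, h.phiG_r, DihedralGroup.r_mul_r]
  inv_mem' := by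
    rintro x ⟨hx1, lx, hx⟩
    refine ⟨by rw [SemidirectProduct.inv_right, hx1, inv_one],
      -((h.unit ^ (toAdd x.right⁻¹).val : (ZMod (p * q))ˣ) * lx), ?_⟩
    rw [SemidirectProduct.inv_left, hx, r_inv, h.phiG_r]
    congr 1
    ring

/-- The subgroup `N²_{pq} = {(a^{qs}, cᵐ)}` of `G_{p,q}`. -/
def NpqTwoSub (h : Hyp p q i) : Subgroup (Gpq h) where
  carrier := {x | ∃ s : ZMod (p * q), x.left = DihedralGroup.r ((q : ZMod (p * q)) * s)}
  one_mem' := ⟨0, by simp [DihedralGroup.one_def, -DihedralGroup.r_zero]⟩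
  mul_mem' := by
    rintro x y ⟨sx, hx⟩ ⟨sy, hy⟩
    refine ⟨sx + (h.unit ^ (toAdd x.right).val : (ZMod (p * q))ˣ) * sy, ?_⟩
    rw [SemidirectProduct.mul_left, hx, hy, h.phiG_r, DihedralGroup.r_mul_r]
    congr 1
    ring
  inv_mem' := by
    rintro x ⟨sx, hx⟩
    refine ⟨-((h.unit ^ (toAdd x.right⁻¹).val : (ZMod (p * q))ˣ) * sx), ?_⟩
    rw [SemidirectProduct.inv_left, hx, r_inv, h.phiG_r]
    congr 1
    ring

/-- The subgroup `N_p = {(a^{qs}, 1)}` of `G_{p,q}`. -/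
def NpSub (h : Hyp p q i) : Subgroup (Gpq h) where
  carrier := {x | x.right = 1 ∧ ∃ s : ZMod (p * q), x.left = DihedralGroup.r ((q : ZMod (p * q)) * s)}
  one_mem' := ⟨rfl, 0, by simp [DihedralGroup.one_def, -DihedralGroup.r_zero]⟩
  mul_mem' := by
    rintro x y ⟨hx1, sx, hx⟩ ⟨hy1, sy, hy⟩
    refine ⟨by rw [SemidirectProduct.mul_right, hx1, hy1, mul_one],
      sx + (h.unit ^ (toAdd x.right).val : (ZMod (p * q))ˣ) * sy, ?_⟩
    rw [SemidirectProduct.mul_left, hx, hy, h.phiG_r, DihedralGroup.r_mul_r]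
    congr 1
    ring
  inv_mem' := by
    rintro x ⟨hx1, sx, hx⟩
    refine ⟨by rw [SemidirectProduct.inv_right, hx1, inv_one],
      -((h.unit ^ (toAdd x.right⁻¹).val : (ZMod (p * q))ˣ) * sx), ?_⟩
    rw [SemidirectProduct.inv_left, hx, r_inv, h.phiG_r]
    congr 1
    ring

/-- The subgroup `N_q = {(a^{ps}, 1)}` of `G_{p,q}`. -/
def NqSub (h : Hyp p q i) : Subgroup (Gpq h) where
  carrier := {x | x.right = 1 ∧ ∃ s : ZMod (p * q), x.left = DihedralGroup.r ((p : ZMod (p * q)) * s)}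
  one_mem' := ⟨rfl, 0, by simp [DihedralGroup.one_def, -DihedralGroup.r_zero]⟩
  mul_mem' := by
    rintro x y ⟨hx1, sx, hx⟩ ⟨hy1, sy, hy⟩
    refine ⟨by rw [SemidirectProduct.mul_right, hx1, hy1, mul_one],
      sx + (h.unit ^ (toAdd x.right).val : (ZMod (p * q))ˣ) * sy, ?_⟩
    rw [SemidirectProduct.mul_left, hx, hy, h.phiG_r, DihedralGroup.r_mul_r]
    congr 1
    ring
  inv_mem' := by
    rintro x ⟨hx1, sx, hx⟩
    refine ⟨by rw [SemidirectProduct.inv_right, hx1, inv_one],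
      -((h.unit ^ (toAdd x.right⁻¹).val : (ZMod (p * q))ˣ) * sx), ?_⟩
    rw [SemidirectProduct.inv_left, hx, r_inv, h.phiG_r]
    congr 1
    ring

end Mizerka


namespace Mizerka

variable {p q i : ℕ}

theorem zmodMulAut_pow (n : ℕ) (u : (ZMod n)ˣ) (k : ℕ) (m : ZMod n) :
    ((zmodMulAut n u) ^ k) (ofAdd m) = ofAdd (((u ^ k : (ZMod n)ˣ) : ZMod n) * m) := by
  induction k generalizing m with
  | zero => simp
  | succ k ih =>
    rw [pow_succ, MulAut.mul_apply]
    have h1 : (zmodMulAut n u) (ofAdd m) = ofAdd ((u : ZMod n) * m) := rfl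
    rw [h1, ih, pow_succ, Units.val_mul]
    ring_nf

theorem Hyp.phiN_apply (h : Hyp p q i) (z : Multiplicative (ZMod q)) (m : ZMod (p * q)) :
    h.phiN z (ofAdd m)
      = ofAdd (((h.unit ^ (toAdd z).val : (ZMod (p * q))ˣ) : ZMod (p * q)) * m) := by
  have h1 : h.phiN z = (zmodMulAut (p * q) h.unit) ^ (toAdd z).val := rfl
  rw [h1, zmodMulAut_pow]

theorem Hyp.phiF_apply (h : Hyp p q i) (z : Multiplicative (ZMod q)) (m : ZMod p) :
    h.phiF z (ofAdd m)
      = ofAdd (((h.unitP ^ (toAdd z).val : (ZMod p)ˣ) : ZMod p) * m) := by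
  have h1 : h.phiF z = (zmodMulAut p h.unitP) ^ (toAdd z).val := rfl
  rw [h1, zmodMulAut_pow]

theorem Hyp.unit_val_pow (h : Hyp p q i) (k : ℕ) :
    ((h.unit ^ k : (ZMod (p * q))ˣ) : ZMod (p * q)) = ((i ^ k : ℕ) : ZMod (p * q)) := by
  push_cast
  rfl

theorem Hyp.unitP_val_pow (h : Hyp p q i) (k : ℕ) :
    ((h.unitP ^ k : (ZMod p)ˣ) : ZMod p) = ((i ^ k : ℕ) : ZMod p) := by
  push_cast
  rfl

theorem key_mul_p {a b : ℕ} (hab : a ≡ b [MOD q]) :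
    (p : ZMod (p * q)) * a = (p : ZMod (p * q)) * b := by
  have h2 : p * a ≡ p * b [MOD p * q] := hab.mul_left' p
  have h3 := (ZMod.natCast_eq_natCast_iff _ _ _).mpr h2
  push_cast at h3
  exact h3

theorem key_mul_q {a b : ℕ} (hab : a ≡ b [MOD p]) :
    (q : ZMod (p * q)) * a = (q : ZMod (p * q)) * b := by
  have h2 : q * a ≡ q * b [MOD q * p] := hab.mul_left' q
  rw [mul_comm q p] at h2
  have h3 := (ZMod.natCast_eq_natCast_iff _ _ _).mpr h2
  push_cast at h3
  exact h3

end Mizerka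

open Mizerka Multiplicative in
/-- The map `f : C_q × F_{p,q} → N_{pq²}` determined on generators by
`f(α) = a^p`, `f(β) = a^q`, `f(γ) = c` is a well-defined group isomorphism.
In particular, `N_{pq²}` is isomorphic to the direct product `C_q × F_{p,q}`. -/
theorem statement_0 {p q i : ℕ} (h : Hyp p q i) :
    ∃ f : (Multiplicative (ZMod q) × Fpq h) ≃* Npq2 h,
      f (ofAdd 1, 1) = (aN h) ^ p ∧
      f (1, SemidirectProduct.inl (ofAdd 1)) = (aN h) ^ q ∧
      f (1, SemidirectProduct.inr (ofAdd 1)) = cN h := by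
  haveI : NeZero p := ⟨h.hp.ne_zero⟩
  haveI : NeZero q := ⟨h.hq.ne_zero⟩
  haveI : NeZero (p * q) := ⟨Nat.mul_ne_zero h.hp.ne_zero h.hq.ne_zero⟩
  haveI : Fact (1 < p) := ⟨h.hp.one_lt⟩
  haveI : Fact (1 < q) := ⟨h.hq.one_lt⟩
  -- powers of the generator a
  have haN : ∀ k : ℕ, (aN h) ^ k = SemidirectProduct.inl (ofAdd ((k : ZMod (p * q)))) := by
    intro k
    rw [aN, ← map_pow]
    congr 1
    rw [← ofAdd_nsmul, nsmul_eq_mul, mul_one]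
  -- a^p is killed by q, a^q is killed by p
  have hg1 : (aN h ^ p) ^ q = 1 := by
    rw [← pow_mul, haN, ZMod.natCast_self, ofAdd_zero, map_one]
  have hf1 : (aN h ^ q) ^ p = 1 := by
    rw [← pow_mul, mul_comm q p, haN, ZMod.natCast_self, ofAdd_zero, map_one]
  -- the three homomorphisms
  set g1 : Multiplicative (ZMod q) →* Npq2 h := zmodPow q (aN h ^ p) hg1 with hg1def
  set f1 : Multiplicative (ZMod p) →* Npq2 h := zmodPow p (aN h ^ q) hf1 with hf1def
  have hg1val : ∀ x : Multiplicative (ZMod q),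
      g1 x = SemidirectProduct.inl (ofAdd (((p * (toAdd x).val : ℕ) : ZMod (p * q)))) := by
    intro x
    show (aN h ^ p) ^ (toAdd x).val = _
    rw [← pow_mul, haN]
  have hf1val : ∀ y : Multiplicative (ZMod p),
      f1 y = SemidirectProduct.inl (ofAdd (((q * (toAdd y).val : ℕ) : ZMod (p * q)))) := by
    intro y
    show (aN h ^ q) ^ (toAdd y).val = _
    rw [← pow_mul, haN]
  -- i^k ≡ 1 mod q
  have himod : ∀ k : ℕ, i ^ k ≡ 1 [MOD q] := by
    intro k
    calc i ^ k ≡ 1 ^ k [MOD q] := h.hmod.pow k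
      _ = 1 := one_pow k
  -- the action fixes multiples of p
  have hfix : ∀ (z : Multiplicative (ZMod q)) (k : ℕ),
      h.phiN z (ofAdd ((p * k : ℕ) : ZMod (p * q))) = ofAdd ((p * k : ℕ) : ZMod (p * q)) := by
    intro z k
    rw [h.phiN_apply, h.unit_val_pow]
    congr 1
    push_cast
    calc ((i : ZMod (p * q)) ^ (toAdd z).val) * ((p : ZMod (p * q)) * k)
        = ((p : ZMod (p * q)) * ((i ^ (toAdd z).val : ℕ) : ZMod (p * q))) * k := by
          push_cast; ring
      _ = ((p : ZMod (p * q)) * ((1 : ℕ) : ZMod (p * q))) * k := by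
          rw [key_mul_p (himod _)]
      _ = (p : ZMod (p * q)) * (k : ZMod (p * q)) := by push_cast; ring
  -- g1 lands in the center
  have hcomm : ∀ (x : Multiplicative (ZMod q)) (w : Npq2 h), Commute (g1 x) w := by
    intro x w
    show g1 x * w = w * g1 x
    rw [hg1val]
    ext
    · rw [SemidirectProduct.mul_left, SemidirectProduct.mul_left]
      simp only [SemidirectProduct.left_inl, SemidirectProduct.right_inl, map_one,
        MulAut.one_apply]
      rw [hfix]
      exact mul_comm (_ : Multiplicative (ZMod (p * q))) _
    · rw [SemidirectProduct.mul_right, SemidirectProduct.mul_right]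
      simp [SemidirectProduct.right_inl]
  -- compatibility for the lift defining the hom on F_{p,q}
  have compat : ∀ z : Multiplicative (ZMod q),
      f1.comp ((h.phiF z).toMonoidHom) =
        (MulAut.conj ((SemidirectProduct.inr : _ →* Npq2 h) z)).toMonoidHom.comp f1 := by
    intro z
    apply MonoidHom.ext
    intro y
    simp only [MonoidHom.comp_apply, MulEquiv.coe_toMonoidHom, MulAut.conj_apply]
    rw [hf1val (h.phiF z y), hf1val y, ← map_inv, ← SemidirectProduct.inl_aut, h.phiN_apply]
    congr 1
    rw [h.unit_val_pow]
    set zv := (toAdd z).val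
    set ty := toAdd y
    -- both sides in ZMod (p*q)
    have hvp : ((ZMod.val (toAdd (h.phiF z y)) : ℕ) : ZMod p)
        = (((i ^ zv * ty.val : ℕ) : ZMod p)) := by
      have : h.phiF z y = ofAdd (((h.unitP ^ zv : (ZMod p)ˣ) : ZMod p) * ty) := by
        conv_lhs => rw [show y = ofAdd ty from rfl]
        rw [h.phiF_apply]
      rw [this]
      simp only [toAdd_ofAdd]
      rw [ZMod.natCast_val, ZMod.cast_id, h.unitP_val_pow]
      push_cast
      rw [ZMod.natCast_val, ZMod.cast_id]
    have key := key_mul_q (p := p) (q := q)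
      ((ZMod.natCast_eq_natCast_iff _ _ _).mp hvp)
    push_cast at key ⊢
    rw [key]
    congr 1
    ring
  set g2 : Fpq h →* Npq2 h :=
    SemidirectProduct.lift f1 SemidirectProduct.inr compat with hg2def
  set F : (Multiplicative (ZMod q) × Fpq h) →* Npq2 h :=
    MonoidHom.noncommCoprod g1 g2 (fun x w => hcomm x (g2 w)) with hFdef
  have hFapply : ∀ (x : Multiplicative (ZMod q)) (w : Fpq h),
      F (x, w) = g1 x * g2 w := fun _ _ => rfl
  -- injectivity
  have hpq : p ≠ q := by
    have h1 : 0 < p - 1 := by have := h.hp.two_le; omega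
    have := Nat.le_of_dvd h1 h.hdvd
    omega
  have hinj : Function.Injective F := by
    rw [injective_iff_map_eq_one]
    rintro ⟨x, w⟩ hxw
    rw [hFapply, hg1val, ← SemidirectProduct.inl_left_mul_inr_right w, map_mul,
      SemidirectProduct.lift_inl, SemidirectProduct.lift_inr, hf1val] at hxw
    rw [← mul_assoc, ← map_mul] at hxw
    have hleft : ((p * (toAdd x).val + q * (toAdd w.left).val : ℕ) : ZMod (p * q)) = 0 := by
      have h1 := congrArg SemidirectProduct.left hxw
      simp only [SemidirectProduct.left_inl, SemidirectProduct.mul_left,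
        SemidirectProduct.left_inr] at h1
      have h2 : (SemidirectProduct.inl (ofAdd ((p * (toAdd x).val : ℕ) : ZMod (p * q)) *
          ofAdd ((q * (toAdd w.left).val : ℕ) : ZMod (p * q))) *
          (SemidirectProduct.inr w.right : Npq2 h)).left = (1 : Npq2 h).left := by
        rw [hxw]
      simp only [SemidirectProduct.mul_left, SemidirectProduct.left_inl,
        SemidirectProduct.right_inl, map_one, MulAut.one_apply, SemidirectProduct.left_inr,
        SemidirectProduct.one_left, mul_one] at h2
      have h3 := congrArg toAdd h2
      simp only [toAdd_mul, toAdd_ofAdd, toAdd_one] at h3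
      push_cast at h3 ⊢
      exact h3
    have hright : w.right = 1 := by
      have h1 := congrArg SemidirectProduct.right hxw
      simpa using h1
    -- reduce mod q : x = 1
    have hx1 : x = 1 := by
      have h1 := congrArg (ZMod.castHom (dvd_mul_left q p) (ZMod q)) hleft
      rw [map_natCast, map_zero] at h1
      push_cast at h1
      rw [ZMod.natCast_self, zero_mul, add_zero] at h1
      have hu : IsUnit ((p : ZMod q)) := by
        rw [ZMod.isUnit_iff_coprime]
        exact (Nat.coprime_primes h.hp h.hq).mpr hpq
      have h2 : ((toAdd x).val : ZMod q) = 0 := by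
        obtain ⟨u, hu⟩ := hu
        rw [← hu] at h1
        exact (Units.mul_right_eq_zero u).mp h1
      rw [ZMod.natCast_val, ZMod.cast_id] at h2
      have : toAdd x = 0 := h2
      rw [← ofAdd_toAdd x, this, ofAdd_zero]
    -- reduce mod p : w.left = 1
    have hwl : w.left = 1 := by
      have h1 := congrArg (ZMod.castHom (dvd_mul_right p q) (ZMod p)) hleft
      rw [map_natCast, map_zero] at h1
      push_cast at h1
      rw [ZMod.natCast_self, zero_mul, zero_add] at h1
      have hu : IsUnit ((q : ZMod p)) := by
        rw [ZMod.isUnit_iff_coprime]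
        exact (Nat.coprime_primes h.hq h.hp).mpr hpq.symm
      have h2 : ((toAdd w.left).val : ZMod p) = 0 := by
        obtain ⟨u, hu⟩ := hu
        rw [← hu] at h1
        exact (Units.mul_right_eq_zero u).mp h1
      rw [ZMod.natCast_val, ZMod.cast_id] at h2
      have : toAdd w.left = 0 := h2
      rw [← ofAdd_toAdd w.left, this, ofAdd_zero]
    have hw : w = 1 := by
      ext
      · rw [hwl]; rfl
      · rw [hright]; rfl
    rw [hx1, hw]
    rfl
  -- cardinalities
  have eF : (Multiplicative (ZMod p) × Multiplicative (ZMod q)) ≃ Fpq h :=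
    ⟨fun x => ⟨x.1, x.2⟩, fun w => (w.left, w.right), fun _ => rfl, fun _ => rfl⟩
  have eN : (Multiplicative (ZMod (p * q)) × Multiplicative (ZMod q)) ≃ Npq2 h :=
    ⟨fun x => ⟨x.1, x.2⟩, fun w => (w.left, w.right), fun _ => rfl, fun _ => rfl⟩
  haveI : Finite (Fpq h) := Finite.of_equiv _ eF
  haveI : Finite (Npq2 h) := Finite.of_equiv _ eN
  have hcard : Nat.card (Multiplicative (ZMod q) × Fpq h) = Nat.card (Npq2 h) := by
    rw [Nat.card_prod, ← Nat.card_congr eF, ← Nat.card_congr eN, Nat.card_prod, Nat.card_prod]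
    have c1 : Nat.card (Multiplicative (ZMod q)) = q := by
      rw [Nat.card_congr (Multiplicative.toAdd (α := ZMod q)), Nat.card_zmod]
    have c2 : Nat.card (Multiplicative (ZMod p)) = p := by
      rw [Nat.card_congr (Multiplicative.toAdd (α := ZMod p)), Nat.card_zmod]
    have c3 : Nat.card (Multiplicative (ZMod (p * q))) = p * q := by
      rw [Nat.card_congr (Multiplicative.toAdd (α := ZMod (p * q))), Nat.card_zmod]
    rw [c1, c2, c3]
    ring
  have hbij : Function.Bijective F :=
    (Nat.bijective_iff_injective_and_card F).mpr ⟨hinj, hcard⟩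
  refine ⟨MulEquiv.ofBijective F hbij, ?_, ?_, ?_⟩
  · show F (ofAdd 1, 1) = (aN h) ^ p
    rw [hFapply, show g2 1 = 1 from map_one g2, mul_one, hg1val]
    rw [haN]
    congr 2
    rw [toAdd_ofAdd, ZMod.val_one, mul_one]
  · show F (1, SemidirectProduct.inl (ofAdd 1)) = (aN h) ^ q
    rw [hFapply, show g1 1 = 1 from map_one g1, one_mul, hg2def]
    rw [SemidirectProduct.lift_inl, hf1val, haN]
    congr 2
    rw [toAdd_ofAdd, ZMod.val_one, mul_one]
  · show F (1, SemidirectProduct.inr (ofAdd 1)) = cN h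
    rw [hFapply, show g1 1 = 1 from map_one g1, one_mul, hg2def, SemidirectProduct.lift_inr]
    rfl
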